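/- (First Expansion Theorem.) Let Q : ℝ[X] → ℝ[X] be a shift-invariant ℝ-linear operator with basic sequence p : ℕ → ℝ[X] (deg(p n) = n, p 0 = 1, (p n).eval(0) = 0 for n ≥ 1, Q(p 0) = 0, Q(p (n+1)) = p n). Then every shift-invariant ℝ-linear operator S : ℝ[X] → ℝ[X] admits the expansion: for every polynomial f ∈ ℝ[X], S f = ∑_{k=0}^{deg f} a_k • (Q^k f), where a_k = (S (p k)).eval(0) and Q^k denotes the k-fold composite of Q. -/

import Mathlib

open Polynomial

/-- First Expansion Theorem: every shift-invariant linear operator `S` on `ℝ[X]` expands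
as `S f = ∑_{k=0}^{deg f} a_k • (Q^k f)` with `a_k = (S (p k)).eval 0`, where `Q` is a
shift-invariant delta operator with basic sequence `p`. -/
theorem first_expansion_theorem
    (Q : Module.End ℝ ℝ[X])
    (hQshift : ∀ (a : ℝ) (f : ℝ[X]),
      Q (f.comp (X + C a)) = (Q f).comp (X + C a))
    (p : ℕ → ℝ[X])
    (hdeg : ∀ n : ℕ, (p n).degree = n)
    (hp0 : p 0 = 1)
    (hpeval : ∀ n : ℕ, 1 ≤ n → (p n).eval 0 = 0)
    (hQ0 : Q (p 0) = 0)
    (hQs : ∀ n : ℕ, Q (p (n + 1)) = p n)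
    (S : Module.End ℝ ℝ[X])
    (hSshift : ∀ (a : ℝ) (f : ℝ[X]),
      S (f.comp (X + C a)) = (S f).comp (X + C a)) :
    ∀ f : ℝ[X],
      S f = ∑ k ∈ Finset.range (f.natDegree + 1),
        ((S (p k)).eval 0) • ((Q ^ k) f) := by
  -- powers of Q are shift invariant
  have hQkshift : ∀ (k : ℕ) (a : ℝ) (g : ℝ[X]),
      (Q ^ k) (g.comp (X + C a)) = ((Q ^ k) g).comp (X + C a) := by
    intro k
    induction k with
    | zero => intro a g; simp
    | succ k ih =>
      intro a g
      rw [pow_succ, Module.End.mul_apply, Module.End.mul_apply, hQshift, ih]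
  -- action of Q^k on the basic sequence
  have hQpow : ∀ (k n : ℕ), (Q ^ k) (p n) = if k ≤ n then p (n - k) else 0 := by
    intro k
    induction k with
    | zero => intro n; simp
    | succ k ih =>
      intro n
      cases n with
      | zero =>
        rw [pow_succ, Module.End.mul_apply, hQ0, map_zero]
        simp
      | succ m =>
        rw [pow_succ, Module.End.mul_apply, hQs, ih]
        simp [Nat.succ_le_succ_iff, Nat.succ_sub_succ]
  have hQpow0 : ∀ (k n : ℕ), ((Q ^ k) (p n)).eval 0 = if k = n then 1 else 0 := by
    intro k n
    rw [hQpow]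
    by_cases h : k ≤ n
    · rcases eq_or_lt_of_le h with h' | h'
      · simp [h, h', hp0]
      · have hne : k ≠ n := ne_of_lt h'
        have : 1 ≤ n - k := by omega
        simp [h, hne, hpeval _ this]
    · have hne : k ≠ n := by omega
      simp [h, hne]
  -- polynomials of small degree lie in the span of the basic sequence
  have hspan : ∀ (n : ℕ) (f : ℝ[X]), f.degree < (n : ℕ) →
      f ∈ Submodule.span ℝ (p '' Set.Iio n) := by
    intro n
    induction n with
    | zero =>
      intro f hf
      have : f = 0 := by
        by_contra h
        exact absurd hf (not_lt.mpr (by simpa using zero_le_degree_iff.mpr h))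
      simp [this]
    | succ n ih =>
      intro f hf
      have hpn : (p n).coeff n ≠ 0 := coeff_ne_zero_of_eq_degree (hdeg n)
      set c : ℝ := f.coeff n / (p n).coeff n with hc
      have hg : (f - c • p n).degree < (n : ℕ) := by
        rw [degree_lt_iff_coeff_zero]
        intro m hm
        rw [coeff_sub, coeff_smul]
        rcases eq_or_lt_of_le hm with h' | h'
        · subst h'
          rw [hc, smul_eq_mul, div_mul_cancel₀ _ hpn, sub_self]
        · have hle : ((n + 1 : ℕ) : WithBot ℕ) ≤ (m : ℕ) := by exact_mod_cast h'
          have h1 : f.coeff m = 0 :=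
            coeff_eq_zero_of_degree_lt (lt_of_lt_of_le hf hle)
          have h2 : (p n).coeff m = 0 := by
            apply coeff_eq_zero_of_degree_lt
            rw [hdeg n]; exact_mod_cast h'
          simp [h1, h2]
      have hmem := ih _ hg
      have hmono : Submodule.span ℝ (p '' Set.Iio n) ≤
          Submodule.span ℝ (p '' Set.Iio (n + 1)) := by
        apply Submodule.span_mono
        apply Set.image_mono
        intro x hx
        exact lt_trans hx (Nat.lt_succ_self n)
      have hpmem : p n ∈ Submodule.span ℝ (p '' Set.Iio (n + 1)) :=
        Submodule.subset_span ⟨n, Nat.lt_succ_self n, rfl⟩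
      have : f = (f - c • p n) + c • p n := by ring
      rw [this]
      exact Submodule.add_mem _ (hmono hmem) (Submodule.smul_mem _ _ hpmem)
  -- Q^k kills polynomials of degree < k
  have hvanish : ∀ (f : ℝ[X]) (k : ℕ), f.degree < (k : ℕ) → (Q ^ k) f = 0 := by
    intro f k hk
    have hsub : Submodule.span ℝ (p '' Set.Iio k) ≤
        LinearMap.ker (Q ^ k : ℝ[X] →ₗ[ℝ] ℝ[X]) := by
      rw [Submodule.span_le]
      rintro x ⟨m, hm, rfl⟩
      simp only [SetLike.mem_coe, LinearMap.mem_ker]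
      rw [hQpow]
      simp [Nat.not_le.mpr hm]
    exact hsub (hspan k f hk)
  -- expansion in the basic sequence
  have hexp : ∀ (N : ℕ) (f : ℝ[X]), f.degree < ((N + 1 : ℕ) : WithBot ℕ) →
      f = ∑ k ∈ Finset.range (N + 1), ((Q ^ k) f).eval 0 • p k := by
    intro N
    set L : ℝ[X] →ₗ[ℝ] ℝ[X] :=
      ∑ k ∈ Finset.range (N + 1),
        (LinearMap.smulRight ((lcoeff ℝ 0).comp (Q ^ k : ℝ[X] →ₗ[ℝ] ℝ[X])) (p k)) with hL
    have hLapp : ∀ g : ℝ[X],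
        L g = ∑ k ∈ Finset.range (N + 1), ((Q ^ k) g).eval 0 • p k := by
      intro g
      rw [hL]
      simp [LinearMap.sum_apply, coeff_zero_eq_eval_zero]
    have hbasis : Set.EqOn (⇑L) (⇑(LinearMap.id : ℝ[X] →ₗ[ℝ] ℝ[X])) (p '' Set.Iio (N + 1)) := by
      rintro x ⟨m, hm, rfl⟩
      rw [hLapp]
      simp only [LinearMap.id_coe, id_eq]
      have : ∀ k ∈ Finset.range (N + 1),
          ((Q ^ k) (p m)).eval 0 • p k = if k = m then p m else 0 := by
        intro k _
        rw [hQpow0]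
        by_cases h : k = m <;> simp [h]
      rw [Finset.sum_congr rfl this, Finset.sum_ite_eq' (Finset.range (N + 1)) m]
      simp [Finset.mem_range.mpr hm]
    intro f hf
    have := LinearMap.eqOn_span hbasis (hspan (N + 1) f hf)
    simpa [hLapp] using this.symm
  -- main argument
  intro f
  set N := f.natDegree with hN
  have hshiftdeg : ∀ a : ℝ, (f.comp (X + C a)).degree < ((N + 1 : ℕ) : WithBot ℕ) := by
    intro a
    rcases eq_or_ne f 0 with rfl | hf0
    · simp
    · have hkey : (f.comp (X + C a)).comp (X - C a) = f := by
        rw [comp_assoc]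
        have : (X + C a).comp (X - C a) = X := by
          simp [add_comp, sub_comp]
        rw [this, comp_X]
      have hcomp0 : f.comp (X + C a) ≠ 0 := by
        intro h
        apply hf0
        rw [← hkey, h, zero_comp]
      rw [← natDegree_lt_iff_degree_lt hcomp0]
      have : (f.comp (X + C a)).natDegree = N := by
        rw [natDegree_comp, natDegree_X_add_C, mul_one]
      rw [this]
      exact_mod_cast Nat.lt_succ_self N
  -- Taylor expansion
  have htaylor : ∀ a : ℝ, f.comp (X + C a) =
      ∑ k ∈ Finset.range (N + 1), ((Q ^ k) f).eval a • p k := by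
    intro a
    have := hexp N (f.comp (X + C a)) (hshiftdeg a)
    rw [this]
    apply Finset.sum_congr rfl
    intro k _
    congr 1
    rw [hQkshift, eval_comp]
    simp
  -- apply S and evaluate
  have heval : ∀ a : ℝ, (S f).eval a =
      (∑ k ∈ Finset.range (N + 1), ((S (p k)).eval 0) • ((Q ^ k) f)).eval a := by
    intro a
    have h1 : S (f.comp (X + C a)) =
        ∑ k ∈ Finset.range (N + 1), ((Q ^ k) f).eval a • S (p k) := by
      rw [htaylor a, map_sum]
      simp [map_smul]
    rw [hSshift] at h1
    have h2 := congrArg (eval 0) h1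
    rw [eval_comp] at h2
    simp only [eval_add, eval_X, eval_C, zero_add] at h2
    rw [h2, eval_finset_sum, eval_finset_sum]
    apply Finset.sum_congr rfl
    intro k _
    rw [eval_smul, eval_smul, smul_eq_mul, smul_eq_mul, mul_comm]
  exact Polynomial.funext heval
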